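/- The curve C: y² = 4x⁶ + 12x⁵ + 9x⁴ + 30x³ + 45x² + 56 admits a degree-7 morphism to the elliptic curve E: z² = w³ - 51w + 142, given explicitly by w = (7 - 546x + 504x² - 714x³ + 252x⁴ - 84x⁵ - 49x⁶ + 42x⁷)/(49 - 98x + 168x² - 126x³ + 84x⁴ - 7x⁶ + 14x⁷) and z = (4(8 + 3x² + 2x³)(-19 + 18x - 12x² + 13x³ + 9x⁴ + 12x⁵ + 4x⁶ + 9x⁷ + 2x⁹) / ((1 - x + x²)³(7 + 3x² + 2x³)(56 + 45x² + 30x³ + 9x⁴ + 12x⁵ + 4x⁶)))·y. In particular, substituting these expressions into z² - w³ + 51w - 142 and using y² = 4x⁶ + 12x⁵ + 9x⁴ + 30x³ + 45x² + 56 yields the zero rational function. -/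

import Mathlib

open Polynomial

/-- Numerator of the `w`-coordinate of the degree-7 map `C → E`. -/
noncomputable def wNum : Polynomial ℚ :=
  7 - 546 * X + 504 * X ^ 2 - 714 * X ^ 3 + 252 * X ^ 4 - 84 * X ^ 5
    - 49 * X ^ 6 + 42 * X ^ 7

/-- Denominator of the `w`-coordinate. -/
noncomputable def wDen : Polynomial ℚ :=
  49 - 98 * X + 168 * X ^ 2 - 126 * X ^ 3 + 84 * X ^ 4 - 7 * X ^ 6 + 14 * X ^ 7

/-- Numerator of the rational function multiplying `y` in the `z`-coordinate. -/
noncomputable def zNum : Polynomial ℚ :=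
  4 * (8 + 3 * X ^ 2 + 2 * X ^ 3) *
    (-19 + 18 * X - 12 * X ^ 2 + 13 * X ^ 3 + 9 * X ^ 4 + 12 * X ^ 5
      + 4 * X ^ 6 + 9 * X ^ 7 + 2 * X ^ 9)

/-- Denominator of the rational function multiplying `y` in the `z`-coordinate. -/
noncomputable def zDen : Polynomial ℚ :=
  (1 - X + X ^ 2) ^ 3 * (7 + 3 * X ^ 2 + 2 * X ^ 3) *
    (56 + 45 * X ^ 2 + 30 * X ^ 3 + 9 * X ^ 4 + 12 * X ^ 5 + 4 * X ^ 6)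

/-- The right-hand side of the hyperelliptic model `y² = h(x)` of the curve `C`. -/
noncomputable def hC : Polynomial ℚ :=
  4 * X ^ 6 + 12 * X ^ 5 + 9 * X ^ 4 + 30 * X ^ 3 + 45 * X ^ 2 + 56

/-- The curve `C : y² = 4x⁶ + 12x⁵ + 9x⁴ + 30x³ + 45x² + 56` admits a degree-7
morphism to the elliptic curve `E : z² = w³ - 51w + 142`: substituting the
explicit expressions for `w` and `z = (zNum/zDen)·y` into `z² - w³ + 51w - 142`
and using `y² = h(x)` yields zero, i.e. `(zNum/zDen)² · h = w³ - 51w + 142`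
holds in `ℚ(x)`; the map `w` has degree `7`. -/
lemma wDen_ne : wDen ≠ 0 := by
  intro h
  have := congrArg (fun p => Polynomial.coeff p 0) h
  simp [wDen] at this

lemma zDen_ne : zDen ≠ 0 := by
  intro h
  have := congrArg (fun p => Polynomial.eval 0 p) h
  simp [zDen] at this

lemma key : zNum ^ 2 * hC * wDen ^ 3 =
    (wNum ^ 3 - 51 * wNum * wDen ^ 2 + 142 * wDen ^ 3) * zDen ^ 2 := by
  unfold zNum hC wDen wNum zDen
  ring

theorem degree_seven_covering :
    wNum.natDegree = 7 ∧ wDen.natDegree = 7 ∧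
    (letI A := algebraMap (Polynomial ℚ) (RatFunc ℚ)
     (A zNum / A zDen) ^ 2 * A hC =
        (A wNum / A wDen) ^ 3 - 51 * (A wNum / A wDen) + 142) := by
  refine ⟨?_, ?_, ?_⟩
  · unfold wNum
    compute_degree!
  · unfold wDen
    compute_degree!
  · set A := algebraMap (Polynomial ℚ) (RatFunc ℚ) with hA
    have hw : A wDen ≠ 0 := by
      exact RatFunc.algebraMap_ne_zero wDen_ne
    have hz : A zDen ≠ 0 := by
      exact RatFunc.algebraMap_ne_zero zDen_ne
    field_simp
    have := congrArg A key
    push_cast [map_mul, map_add, map_sub, map_pow, map_ofNat] at this ⊢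
    linear_combination this
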